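/- Assume X is reflexive, each g_i is nonzero, and condition (A1) holds. Then (Θ̃, N) is complete: if (c^ν)_{ν∈ℕ} is a sequence in Θ̃ such that for every ε > 0 there is ν₀ with c^μ − c^ν ∈ Θ̃ and N(c^μ − c^ν) < ε for all μ, ν ≥ ν₀, then there exists c ∈ Θ̃ with c − c^ν ∈ Θ̃ for large ν and N(c − c^ν) → 0 as ν → ∞. -/

import Mathlib

noncomputable section

open Set

/-- `M^c`: the set of `f ∈ X` with `|c i| ≤ |g i (f)|` for all `i`. -/
def MSet {X : Type*} [NormedAddCommGroup X] [NormedSpace ℝ X]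
    (g : ℕ → X →L[ℝ] ℝ) (c : ℕ → ℝ) : Set X :=
  {f | ∀ i, |c i| ≤ |g i f|}

/-- `Θ̃`: the set of scalar sequences `c` with `M^c ≠ ∅`. -/
def ThetaT {X : Type*} [NormedAddCommGroup X] [NormedSpace ℝ X]
    (g : ℕ → X →L[ℝ] ℝ) : Set (ℕ → ℝ) :=
  {c | (MSet g c).Nonempty}

/-- `N(c) = inf{‖f‖ : f ∈ M^c}`. -/
def NN {X : Type*} [NormedAddCommGroup X] [NormedSpace ℝ X]
    (g : ℕ → X →L[ℝ] ℝ) (c : ℕ → ℝ) : ℝ :=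
  sInf ((fun f => ‖f‖) '' MSet g c)

open Filter Topology

lemma NN_le_norm {X : Type*} [NormedAddCommGroup X] [NormedSpace ℝ X]
    (g : ℕ → X →L[ℝ] ℝ) {c : ℕ → ℝ} {f : X} (hf : f ∈ MSet g c) :
    NN g c ≤ ‖f‖ :=
  csInf_le ⟨0, by rintro y ⟨x, -, rfl⟩; exact norm_nonneg x⟩ ⟨f, hf, rfl⟩

lemma exists_mem_MSet_norm_lt {X : Type*} [NormedAddCommGroup X] [NormedSpace ℝ X]
    (g : ℕ → X →L[ℝ] ℝ) {c : ℕ → ℝ} {ε : ℝ} (hc : c ∈ ThetaT g) (h : NN g c < ε) :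
    ∃ f ∈ MSet g c, ‖f‖ < ε := by
  obtain ⟨y, ⟨x, hx, rfl⟩, hy⟩ := exists_lt_of_csInf_lt (hc.image _) h
  exact ⟨x, hx, hy⟩

lemma weak_cluster {X : Type*} [NormedAddCommGroup X] [NormedSpace ℝ X]
    (hrefl : Function.Surjective (NormedSpace.inclusionInDoubleDual ℝ X))
    (r : ℕ → X) (R : ℝ) (hR : ∀ K, ‖r K‖ ≤ R) (U : Ultrafilter ℕ) :
    ∃ f : X, ‖f‖ ≤ R ∧ ∀ ψ : StrongDual ℝ X,
      Tendsto (fun K => ψ (r K)) U (𝓝 (ψ f)) := by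
  set J := NormedSpace.inclusionInDoubleDual ℝ X
  set φ : ℕ → WeakDual ℝ (StrongDual ℝ X) :=
    fun K => StrongDual.toWeakDual (J (r K))
  have hmem : ∀ K, φ K ∈ WeakDual.toStrongDual ⁻¹' Metric.closedBall 0 R := by
    intro K
    simp only [mem_preimage, Metric.mem_closedBall, dist_zero_right]
    have : ‖J (r K)‖ = ‖r K‖ :=
      (NormedSpace.inclusionInDoubleDualLi (𝕜 := ℝ) (E := X)).norm_map (r K)
    show dist (J (r K)) 0 ≤ R
    exact (dist_zero_right (J (r K))).trans_le (this ▸ hR K)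
  have hcpt := WeakDual.isCompact_closedBall (𝕜 := ℝ) (E := StrongDual ℝ X) 0 R
  obtain ⟨F, hFmem, hFle⟩ := hcpt.ultrafilter_le_nhds (U.map φ)
    (by rw [Ultrafilter.coe_map]; exact le_principal_iff.2 (Filter.mem_map.2 (by
      filter_upwards with K using hmem K)))
  obtain ⟨f, hf⟩ := hrefl (WeakDual.toStrongDual F)
  refine ⟨f, ?_, ?_⟩
  · have : ‖J f‖ ≤ R := by
      have := hFmem
      simp only [mem_preimage, Metric.mem_closedBall, dist_zero_right] at this
      rwa [← hf] at this
    rw [← (NormedSpace.inclusionInDoubleDualLi (𝕜 := ℝ) (E := X)).norm_map f]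
    exact this
  · intro ψ
    have hcont : Continuous fun F' : WeakDual ℝ (StrongDual ℝ X) => F' ψ :=
      WeakDual.eval_continuous ψ
    have h1 : Tendsto (fun K => (φ K) ψ) U (𝓝 (F ψ)) :=
      (hcont.tendsto F).comp hFle
    have h2 : ∀ K, (φ K) ψ = ψ (r K) := fun K => rfl
    have h3 : F ψ = ψ f := (congrArg (fun T => T ψ) hf).symm
    simpa [h2, h3] using h1

theorem thetaT_complete
    {X : Type*} [NormedAddCommGroup X] [NormedSpace ℝ X] [CompleteSpace X]
    (hrefl : Function.Surjective (NormedSpace.inclusionInDoubleDual ℝ X))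
    (g : ℕ → X →L[ℝ] ℝ) (hg : ∀ i, g i ≠ 0)
    (hA1 : ∀ c ∈ ThetaT g, ∀ d ∈ ThetaT g, ∀ f ∈ MSet g c, ∀ h ∈ MSet g d,
      ∃ r ∈ MSet g (c + d), ‖r‖ ≤ ‖f‖ + ‖h‖)
    (cs : ℕ → ℕ → ℝ) (hcs : ∀ ν, cs ν ∈ ThetaT g)
    (hcauchy : ∀ ε > 0, ∃ ν₀ : ℕ, ∀ μ ≥ ν₀, ∀ ν ≥ ν₀,
      cs μ - cs ν ∈ ThetaT g ∧ NN g (cs μ - cs ν) < ε) :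
    ∃ c ∈ ThetaT g, ∀ ε > 0, ∃ ν₀ : ℕ, ∀ ν ≥ ν₀,
      c - cs ν ∈ ThetaT g ∧ NN g (c - cs ν) < ε := by
  classical
  -- pointwise limit `c`
  have hpt : ∀ i, ∃ l, Tendsto (fun ν => cs ν i) atTop (𝓝 l) := by
    intro i
    apply cauchySeq_tendsto_of_complete
    rw [Metric.cauchySeq_iff']
    intro δ hδ
    obtain ⟨ν₀, h⟩ := hcauchy (δ / (‖g i‖ + 1)) (by positivity)
    refine ⟨ν₀, fun n hn => ?_⟩
    obtain ⟨hmem, hN⟩ := h n hn ν₀ le_rfl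
    obtain ⟨f, hf, hfn⟩ := exists_mem_MSet_norm_lt g hmem hN
    have h1 : |cs n i - cs ν₀ i| ≤ |g i f| := by
      have := hf i; simpa using this
    have h2 : |g i f| ≤ ‖g i‖ * ‖f‖ := (g i).le_opNorm f
    have h3 : ‖g i‖ * ‖f‖ ≤ ‖g i‖ * (δ / (‖g i‖ + 1)) :=
      mul_le_mul_of_nonneg_left hfn.le (norm_nonneg _)
    have h4 : ‖g i‖ * (δ / (‖g i‖ + 1)) < δ := by
      have hgn : (0:ℝ) ≤ ‖g i‖ := norm_nonneg _
      have hlt : ‖g i‖ / (‖g i‖ + 1) < 1 := (div_lt_one (by positivity)).2 (by linarith)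
      calc ‖g i‖ * (δ / (‖g i‖ + 1)) = δ * (‖g i‖ / (‖g i‖ + 1)) := by ring
        _ < δ * 1 := by exact mul_lt_mul_of_pos_left hlt hδ
        _ = δ := mul_one δ
    rw [Real.dist_eq]
    linarith
  choose c hc using hpt
  -- key construction
  have key : ∀ ε > (0:ℝ), ∃ ν₀ : ℕ, ∀ ν ≥ ν₀, ∃ f ∈ MSet g (c - cs ν), ‖f‖ < ε := by
    intro ε hε
    obtain ⟨ν₀, hν₀⟩ := hcauchy (ε / 2) (by positivity)
    choose a ha using fun k : ℕ => hcauchy (ε / 2 ^ (k + 3)) (by positivity)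
    refine ⟨ν₀, fun ν hν => ?_⟩
    set m : ℕ → ℕ := fun k => ν + ν₀ + k + ∑ j ∈ Finset.range (k + 1), a j with hm
    have hm0 : ν₀ ≤ m 0 := by simp [hm]; omega
    have hmk_a : ∀ k, a k ≤ m k := by
      intro k
      have : a k ≤ ∑ j ∈ Finset.range (k + 1), a j :=
        Finset.single_le_sum (fun j _ => Nat.zero_le _) (Finset.self_mem_range_succ k)
      simp [hm]; omega
    have hmono : ∀ k, m k ≤ m (k + 1) := by
      intro k
      have : ∑ j ∈ Finset.range (k + 1), a j ≤ ∑ j ∈ Finset.range (k + 2), a j :=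
        Finset.sum_le_sum_of_subset (Finset.range_subset_range.2 (by omega))
      simp only [hm, show k + 1 + 1 = k + 2 from rfl]; omega
    have hmtop : Tendsto m atTop atTop :=
      tendsto_atTop_mono (fun k => by simp [hm]; omega) tendsto_id
    -- choose the pieces
    obtain ⟨hp0, hN0⟩ := hν₀ (m 0) hm0 ν hν
    obtain ⟨f0, hf0, hf0n⟩ := exists_mem_MSet_norm_lt g hp0 hN0
    have hpk : ∀ k, cs (m (k + 1)) - cs (m k) ∈ ThetaT g ∧
        NN g (cs (m (k + 1)) - cs (m k)) < ε / 2 ^ (k + 3) := by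
      intro k
      exact ha k (m (k + 1)) (le_trans (hmk_a k) (hmono k)) (m k) (hmk_a k)
    have hfk : ∀ k, ∃ f ∈ MSet g (cs (m (k + 1)) - cs (m k)), ‖f‖ < ε / 2 ^ (k + 3) :=
      fun k => exists_mem_MSet_norm_lt g (hpk k).1 (hpk k).2
    choose fk hfkmem hfkn using hfk
    -- inductive telescoping via (A1)
    have hrec : ∀ K, ∃ x ∈ MSet g (cs (m K) - cs ν),
        ‖x‖ < ε / 2 + ε / 4 - ε / 2 ^ (K + 2) := by
      intro K
      induction K with
      | zero =>
        refine ⟨f0, hf0, ?_⟩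
        norm_num
        linarith
      | succ K ih =>
        obtain ⟨x, hx, hxn⟩ := ih
        obtain ⟨r, hr, hrn⟩ := hA1 (cs (m (K + 1)) - cs (m K)) ⟨fk K, hfkmem K⟩
          (cs (m K) - cs ν) ⟨x, hx⟩ (fk K) (hfkmem K) x hx
        have heq : (cs (m (K + 1)) - cs (m K)) + (cs (m K) - cs ν)
            = cs (m (K + 1)) - cs ν := by
          funext i; simp only [Pi.add_apply, Pi.sub_apply]; ring
        rw [heq] at hr
        refine ⟨r, hr, ?_⟩
        have h2 : (2:ℝ) ^ (K + 1 + 2) = 2 ^ (K + 2) * 2 := by ring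
        have hpos : (0:ℝ) < 2 ^ (K + 2) := by positivity
        calc ‖r‖ ≤ ‖fk K‖ + ‖x‖ := hrn
          _ < ε / 2 ^ (K + 3) + (ε / 2 + ε / 4 - ε / 2 ^ (K + 2)) :=
            add_lt_add (hfkn K) hxn
          _ = ε / 2 + ε / 4 - ε / 2 ^ (K + 1 + 2) := by
            rw [h2]
            field_simp
            ring
    choose r hrmem hrn using hrec
    have hRb : ∀ K, ‖r K‖ ≤ ε / 2 + ε / 4 := by
      intro K
      have := hrn K
      have hp : (0:ℝ) < ε / 2 ^ (K + 2) := by positivity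
      linarith
    -- weak cluster point
    set U : Ultrafilter ℕ := Ultrafilter.of atTop
    have hU : (U : Filter ℕ) ≤ atTop := Ultrafilter.of_le _
    obtain ⟨f, hfn, hweak⟩ := weak_cluster hrefl r (ε / 2 + ε / 4) hRb U
    refine ⟨f, ?_, by linarith⟩
    intro i
    have t1 : Tendsto (fun K => |cs (m K) i - cs ν i|) (U : Filter ℕ)
        (𝓝 |c i - cs ν i|) := by
      have := (((hc i).comp hmtop).sub (tendsto_const_nhds (x := cs ν i))).abs
      exact this.mono_left hU
    have t2 : Tendsto (fun K => |g i (r K)|) (U : Filter ℕ) (𝓝 |g i f|) :=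
      (hweak (g i)).abs
    have hle : ∀ K, |cs (m K) i - cs ν i| ≤ |g i (r K)| := by
      intro K
      have := hrmem K i
      simpa using this
    have := le_of_tendsto_of_tendsto' t1 t2 hle
    simpa using this
  -- conclusion
  have hcT : c ∈ ThetaT g := by
    obtain ⟨ν₀, h⟩ := key 1 one_pos
    obtain ⟨f, hf, -⟩ := h ν₀ le_rfl
    obtain ⟨h0, hh0⟩ := hcs ν₀
    obtain ⟨r, hr, -⟩ := hA1 (c - cs ν₀) ⟨f, hf⟩ (cs ν₀) (hcs ν₀) f hf h0 hh0
    have heq : (c - cs ν₀) + cs ν₀ = c := by funext i; simp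
    rw [heq] at hr
    exact ⟨r, hr⟩
  refine ⟨c, hcT, fun ε hε => ?_⟩
  obtain ⟨ν₀, h⟩ := key ε hε
  refine ⟨ν₀, fun ν hν => ?_⟩
  obtain ⟨f, hf, hfn⟩ := h ν hν
  exact ⟨⟨f, hf⟩, lt_of_le_of_lt (NN_le_norm g hf) hfn⟩
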